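/- Let X and Y be metric spaces, let μ be a σ-finite Borel measure on X, let B ⊆ X be a Borel set with 0 < μ(B) < ∞, and let W : X × Y → ℝ and g : X × Y → [0,∞) be Borel measurable with W(·,y) μ-integrable on B for every y ∈ Y. Assume that for each fixed x ∈ X the function g(x,·) is an upper gradient of W(x,·) on Y (in the unit-speed formulation), and that for every L ≥ 0 and every 1-Lipschitz curve γ : [0,L] → Y the functions (x,s) ↦ W(x,γ(s)) and (x,s) ↦ g(x,γ(s)) are integrable on B × [0,L] with respect to μ × Lebesgue measure. Define W_B(y) = (1/μ(B)) ∫_B W(x,y) dμ(x) and f(y) = (1/μ(B)) ∫_B |W(x,y) − W_B(y)| dμ(x). Then the function G(y) = (2/μ(B)) ∫_B g(x,y) dμ(x) is an upper gradient of f on Y: for every 1-Lipschitz curve γ : [0,L] → Y one has |f(γ(L)) − f(γ(0))| ≤ (2/μ(B)) ∫_0^L ∫_B g(x,γ(s)) dμ(x) ds. -/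

import Mathlib

open MeasureTheory Metric Set
open scoped ENNReal NNReal

noncomputable section

/-- `g` is an upper gradient of `u` on the metric space `Z`, in the unit-speed
formulation: for every `L ≥ 0` and every `1`-Lipschitz curve `γ : [0,L] → Z` one has
`|u (γ L) - u (γ 0)| ≤ ∫_0^L g (γ s) ds`. -/
def IsUpperGradient {Z : Type*} [MetricSpace Z] (u g : Z → ℝ) : Prop :=
  ∀ L : ℝ, 0 ≤ L → ∀ γ : ℝ → Z, LipschitzOnWith 1 γ (Set.Icc 0 L) →
    |u (γ L) - u (γ 0)| ≤ ∫ t in (0:ℝ)..L, g (γ t)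

/-- If `g(x,·)` is a partial upper gradient of `W(x,·)` on `Y` for every `x`, then
`G(y) = (2/μ(B)) ∫_B g(x,y) dμ(x)` is an upper gradient on `Y` of the mean-oscillation
function `f(y) = (1/μ(B)) ∫_B |W(x,y) - W_B(y)| dμ(x)`, where
`W_B(y) = (1/μ(B)) ∫_B W(x,y) dμ(x)`. -/
theorem upperGradient_of_meanOscillation
    {X Y : Type*}
    [MetricSpace X] [MeasurableSpace X] [BorelSpace X]
    [MetricSpace Y] [MeasurableSpace Y] [BorelSpace Y]
    (μ : Measure X) [SigmaFinite μ]
    (B : Set X) (hBmeas : MeasurableSet B) (hB0 : 0 < μ B) (hBfin : μ B < ⊤)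
    (W g : X × Y → ℝ) (hW : Measurable W) (hg : Measurable g)
    (hg0 : ∀ z, 0 ≤ g z)
    (hWint : ∀ y : Y, IntegrableOn (fun x => W (x, y)) B μ)
    (hupper : ∀ x : X, IsUpperGradient (fun y => W (x, y)) (fun y => g (x, y)))
    (hprodint : ∀ L : ℝ, 0 ≤ L → ∀ γ : ℝ → Y, LipschitzOnWith 1 γ (Set.Icc 0 L) →
      Integrable (fun q : X × ℝ => W (q.1, γ q.2))
        ((μ.restrict B).prod (volume.restrict (Set.Icc 0 L))) ∧
      Integrable (fun q : X × ℝ => g (q.1, γ q.2))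
        ((μ.restrict B).prod (volume.restrict (Set.Icc 0 L)))) :
    IsUpperGradient
      (fun y => (μ B).toReal⁻¹ *
        ∫ x in B, |W (x, y) - (μ B).toReal⁻¹ * ∫ x' in B, W (x', y) ∂μ| ∂μ)
      (fun y => (2 / (μ B).toReal) * ∫ x in B, g (x, y) ∂μ) := by
  intro L hL γ hγ
  obtain ⟨hWI, hgI⟩ := hprodint L hL γ hγ
  set cB : ℝ := (μ B).toReal with hcB
  have hc : 0 < cB := ENNReal.toReal_pos hB0.ne' hBfin.ne
  set WB : Y → ℝ := fun y => cB⁻¹ * ∫ x' in B, W (x', y) ∂μ with hWB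
  set h : X → ℝ := fun x => ∫ t in Set.Icc (0:ℝ) L, g (x, γ t) with hh
  have hint_eq : ∀ x, (∫ t in (0:ℝ)..L, g (x, γ t)) = h x := by
    intro x
    rw [intervalIntegral.integral_of_le hL, ← integral_Icc_eq_integral_Ioc]
  -- integrability of h on B
  have hhint : IntegrableOn h B μ := hgI.integral_prod_left
  -- pointwise bound
  have hdle : ∀ x, |W (x, γ L) - W (x, γ 0)| ≤ h x := fun x => by
    rw [← hint_eq x]; exact hupper x L hL γ hγ
  have hdint : IntegrableOn (fun x => |W (x, γ L) - W (x, γ 0)|) B μ :=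
    ((hWint (γ L)).sub (hWint (γ 0))).abs
  have key1 : (∫ x in B, |W (x, γ L) - W (x, γ 0)| ∂μ) ≤ ∫ x in B, h x ∂μ :=
    integral_mono hdint hhint hdle
  have hIh : (0:ℝ) ≤ ∫ x in B, h x ∂μ :=
    integral_nonneg fun x => integral_nonneg fun t => hg0 _
  -- bound on |WB γL - WB γ0|
  have hWBdiff : |WB (γ L) - WB (γ 0)| ≤ cB⁻¹ * ∫ x in B, h x ∂μ := by
    have h1 : WB (γ L) - WB (γ 0)
        = cB⁻¹ * ∫ x in B, (W (x, γ L) - W (x, γ 0)) ∂μ := by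
      rw [integral_sub (hWint (γ L)) (hWint (γ 0))]; ring
    rw [h1, abs_mul, abs_of_nonneg (inv_nonneg.mpr hc.le)]
    gcongr
    calc |∫ x in B, (W (x, γ L) - W (x, γ 0)) ∂μ|
        ≤ ∫ x in B, |W (x, γ L) - W (x, γ 0)| ∂μ := by
          simpa [Real.norm_eq_abs] using
            norm_integral_le_integral_norm (μ := μ.restrict B)
              (f := fun x => W (x, γ L) - W (x, γ 0))
      _ ≤ ∫ x in B, h x ∂μ := key1
  -- integrability of the oscillation integrand
  have hosc : ∀ y, IntegrableOn (fun x => |W (x, y) - WB y|) B μ := fun y =>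
    ((hWint y).sub ((integrableOn_const_iff).mpr (Or.inr hBfin))).abs
  -- main estimate on LHS
  have main : |(cB⁻¹ * ∫ x in B, |W (x, γ L) - WB (γ L)| ∂μ)
      - cB⁻¹ * ∫ x in B, |W (x, γ 0) - WB (γ 0)| ∂μ|
      ≤ 2 * cB⁻¹ * ∫ x in B, h x ∂μ := by
    have hsub : (∫ x in B, |W (x, γ L) - WB (γ L)| ∂μ)
        - ∫ x in B, |W (x, γ 0) - WB (γ 0)| ∂μ
        = ∫ x in B, (|W (x, γ L) - WB (γ L)| - |W (x, γ 0) - WB (γ 0)|) ∂μ :=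
      (integral_sub (hosc (γ L)) (hosc (γ 0))).symm
    have hpt : ∀ x, abs (|W (x, γ L) - WB (γ L)| - |W (x, γ 0) - WB (γ 0)|)
        ≤ |W (x, γ L) - W (x, γ 0)| + |WB (γ L) - WB (γ 0)| := fun x => by
      calc abs (|W (x, γ L) - WB (γ L)| - |W (x, γ 0) - WB (γ 0)|)
          ≤ |(W (x, γ L) - WB (γ L)) - (W (x, γ 0) - WB (γ 0))| :=
            abs_abs_sub_abs_le_abs_sub _ _
        _ ≤ |W (x, γ L) - W (x, γ 0)| + |WB (γ L) - WB (γ 0)| := by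
            rw [show (W (x, γ L) - WB (γ L)) - (W (x, γ 0) - WB (γ 0))
              = (W (x, γ L) - W (x, γ 0)) - (WB (γ L) - WB (γ 0)) by ring]
            exact abs_sub _ _
    rw [← mul_sub, abs_mul, abs_of_nonneg (inv_nonneg.mpr hc.le), hsub]
    have step : |∫ x in B, (|W (x, γ L) - WB (γ L)| - |W (x, γ 0) - WB (γ 0)|) ∂μ|
        ≤ ∫ x in B, h x ∂μ + cB * |WB (γ L) - WB (γ 0)| := by
      calc |∫ x in B, (|W (x, γ L) - WB (γ L)| - |W (x, γ 0) - WB (γ 0)|) ∂μ|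
          ≤ ∫ x in B, abs (|W (x, γ L) - WB (γ L)| - |W (x, γ 0) - WB (γ 0)|) ∂μ := by
            simpa [Real.norm_eq_abs] using
              norm_integral_le_integral_norm (μ := μ.restrict B)
                (f := fun x => |W (x, γ L) - WB (γ L)| - |W (x, γ 0) - WB (γ 0)|)
        _ ≤ ∫ x in B, (|W (x, γ L) - W (x, γ 0)| + |WB (γ L) - WB (γ 0)|) ∂μ :=
            integral_mono (((hosc (γ L)).sub (hosc (γ 0))).abs)
              (hdint.add ((integrableOn_const_iff).mpr (Or.inr hBfin))) hpt
        _ = (∫ x in B, |W (x, γ L) - W (x, γ 0)| ∂μ)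
            + ∫ x in B, |WB (γ L) - WB (γ 0)| ∂μ :=
            integral_add hdint ((integrableOn_const_iff).mpr (Or.inr hBfin))
        _ ≤ (∫ x in B, h x ∂μ) + cB * |WB (γ L) - WB (γ 0)| := by
            rw [setIntegral_const]
            simp only [smul_eq_mul, ← hcB]
            exact add_le_add key1 le_rfl
    calc cB⁻¹ * |∫ x in B, (|W (x, γ L) - WB (γ L)| - |W (x, γ 0) - WB (γ 0)|) ∂μ|
        ≤ cB⁻¹ * ((∫ x in B, h x ∂μ) + cB * |WB (γ L) - WB (γ 0)|) := by
          gcongr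
      _ ≤ cB⁻¹ * ((∫ x in B, h x ∂μ) + cB * (cB⁻¹ * ∫ x in B, h x ∂μ)) := by
          gcongr
      _ = 2 * cB⁻¹ * ∫ x in B, h x ∂μ := by
          field_simp; ring
  -- rewrite RHS using Fubini
  have swap : (∫ x in B, h x ∂μ)
      = ∫ t in Set.Icc (0:ℝ) L, ∫ x in B, g (x, γ t) ∂μ := by
    exact integral_integral_swap (f := fun x t => g (x, γ t)) hgI
  have hRHS : (∫ t in (0:ℝ)..L, (2 / cB) * ∫ x in B, g (x, γ t) ∂μ)
      = 2 * cB⁻¹ * ∫ x in B, h x ∂μ := by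
    rw [intervalIntegral.integral_const_mul, intervalIntegral.integral_of_le hL,
      ← integral_Icc_eq_integral_Ioc, ← swap, div_eq_mul_inv]
  simpa [hRHS] using main
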